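/- arXiv:1408.4983 — 2 statements merged into one kernel-verified Lean document; each statement's English description precedes it below -/
import Mathlib

section
/- Let N = 3 and η = exp(2πi/3). Then ω³_{0;1} = (η² − 1)/3, and for all n ≥ 1: ω³_{2n−1;1} = ω³_{2n−1;2} = (3^{2n} − 1)·B_{2n}/(4n), and ω³_{2n;1} = −ω³_{2n;2} = −(i√3/(6(2n+1)))·Σ_{j=0}^{2n} 3^{2n−j}·(2^{j+1} − 1)·C(2n+1, 2n−j)·B_{2n−j}, where C(·,·) denotes the binomial coefficient. -/
open scoped BigOperators

noncomputable section

/-- The standard primitive `N`-th root of unity `η = exp(2πi/N)`. -/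
def rootN (N : ℕ) : ℂ := Complex.exp (2 * (Real.pi : ℂ) * Complex.I / (N : ℂ))

/-- The power series `(exp(X) - 1)/X ∈ ℂ[[X]]`. -/
def expm1DivX : PowerSeries ℂ :=
  PowerSeries.mk fun n => (PowerSeries.coeff (R := ℂ) (n + 1)) (PowerSeries.exp ℂ - 1)

/-- `ω^N_{n;α}`. -/
def omegaN (N : ℕ) (α : ℤ) (n : ℕ) : ℂ :=
  if (N : ℤ) ∣ α then
    (n.factorial : ℂ) * (PowerSeries.coeff (R := ℂ) (n + 1)) expm1DivX⁻¹
  else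
    (n.factorial : ℂ) *
      (PowerSeries.coeff (R := ℂ) n) (PowerSeries.C (R := ℂ) (rootN N ^ α) * PowerSeries.exp ℂ - 1)⁻¹

namespace Aux4
open PowerSeries


lemma eta_eq : rootN 3 = -1/2 + (Real.sqrt 3)/2 * Complex.I := by
  have h : (2 * (Real.pi : ℂ) * Complex.I / ((3:ℕ) : ℂ)) = ((2 * Real.pi / 3 : ℝ) : ℂ) * Complex.I := by
    push_cast; ring
  rw [rootN, h, Complex.exp_mul_I]
  have h1 : Real.cos (2 * Real.pi / 3) = -(1/2) := by
    have : (2:ℝ) * Real.pi / 3 = Real.pi - Real.pi/3 := by ring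
    rw [this, Real.cos_pi_sub, Real.cos_pi_div_three]
  have h2 : Real.sin (2 * Real.pi / 3) = Real.sqrt 3 / 2 := by
    have : (2:ℝ) * Real.pi / 3 = Real.pi - Real.pi/3 := by ring
    rw [this, Real.sin_pi_sub, Real.sin_pi_div_three]
  rw [← Complex.ofReal_cos, ← Complex.ofReal_sin, h1, h2]
  push_cast; ring

lemma sqrt3_sq : ((Real.sqrt 3 : ℝ) : ℂ)^2 = 3 := by
  norm_cast
  rw [Real.sq_sqrt]; norm_num

lemma eta_cube : rootN 3 ^ 3 = 1 := by
  rw [eta_eq]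
  linear_combination ((3:ℂ)/8 - ((Real.sqrt 3:ℝ):ℂ)/8 * Complex.I) * sqrt3_sq
    + (-(3*((Real.sqrt 3:ℝ):ℂ)^2)/8 + (((Real.sqrt 3:ℝ):ℂ)^3/8)*Complex.I) * Complex.I_sq

lemma eta_sum : rootN 3 ^ 2 + rootN 3 + 1 = 0 := by
  rw [eta_eq]
  linear_combination (-(1:ℂ)/4) * sqrt3_sq + (((Real.sqrt 3:ℝ):ℂ)^2/4) * Complex.I_sq

lemma eta_ne_one : rootN 3 ≠ 1 := by
  rw [eta_eq]
  intro h
  have := congrArg Complex.re h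
  simp at this
  norm_num at this

lemma eta_sq_ne_one : rootN 3 ^ 2 ≠ 1 := by
  intro h
  apply eta_ne_one
  linear_combination eta_cube - rootN 3 * h

lemma eta_prod : (rootN 3 - 1) * (rootN 3 ^ 2 - 1) = 3 := by
  have h3 := eta_cube
  have hs := eta_sum
  linear_combination h3 - hs

lemma eta_diff : rootN 3 ^ 2 - rootN 3 = -(Complex.I * ((Real.sqrt 3:ℝ):ℂ)) := by
  rw [eta_eq]
  linear_combination (-(1:ℂ)/4) * sqrt3_sq + (((Real.sqrt 3:ℝ):ℂ)^2/4) * Complex.I_sq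

local notation "E" => PowerSeries.exp ℂ
local notation "B" => bernoulliPowerSeries ℂ

def g1 : PowerSeries ℂ := PowerSeries.C (R := ℂ) (rootN 3) * E - 1
def g2 : PowerSeries ℂ := PowerSeries.C (R := ℂ) ((rootN 3) ^ 2) * E - 1
def B3 : PowerSeries ℂ := PowerSeries.rescale (3:ℂ) B

lemma hc1 : PowerSeries.constantCoeff (R := ℂ) g1 ≠ 0 := by
  have h : PowerSeries.constantCoeff (R := ℂ) g1 = (rootN 3) - 1 := by
    simp [g1, PowerSeries.constantCoeff_exp]
  rw [h]; exact sub_ne_zero_of_ne eta_ne_one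

lemma hc2 : PowerSeries.constantCoeff (R := ℂ) g2 ≠ 0 := by
  have h : PowerSeries.constantCoeff (R := ℂ) g2 = (rootN 3) ^ 2 - 1 := by
    simp [g2, PowerSeries.constantCoeff_exp]
  rw [h]; exact sub_ne_zero_of_ne eta_sq_ne_one

lemma hinv1 : g1 * g1⁻¹ = 1 := PowerSeries.mul_inv_cancel _ hc1
lemma hinv2 : g2 * g2⁻¹ = 1 := PowerSeries.mul_inv_cancel _ hc2

lemma hg12 : g1 * g2 = E^2 + E + 1 := by
  have h : g1 * g2 = PowerSeries.C (R := ℂ) ((rootN 3) ^3) * E^2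
      - PowerSeries.C (R := ℂ) ((rootN 3) ^2 + (rootN 3)) * E + 1 := by
    simp only [g1, g2, map_mul, map_add, map_pow]; ring
  have h2 : (rootN 3) ^2 + (rootN 3) = -1 := by linear_combination eta_sum
  rw [h, eta_cube, h2]
  simp only [map_one, map_neg]
  ring

lemma hgsum : g1 + g2 = -E - 2 := by
  have h2 : (rootN 3) + (rootN 3) ^2 = -1 := by linear_combination eta_sum
  have h : g1 + g2 = PowerSeries.C (R := ℂ) ((rootN 3) + (rootN 3) ^2) * E - 2 := by
    simp only [g1, g2, map_add]; ring
  rw [h, h2]; simp only [map_one, map_neg]; ring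

lemma hB3 : B3 * (E^3 - 1) = PowerSeries.C (R := ℂ) 3 * X := by
  have h := congrArg (PowerSeries.rescale (3:ℂ)) (bernoulliPowerSeries_mul_exp_sub_one ℂ)
  rw [map_mul, map_sub, map_one, rescale_X] at h
  have hp : (E^3 : PowerSeries ℂ) = PowerSeries.rescale ((3:ℕ):ℂ) E := exp_pow_eq_rescale_exp 3
  rw [B3, hp, show ((3:ℕ):ℂ) = (3:ℂ) from by norm_num]
  exact h

lemma hE3ne : (E^3 - 1 : PowerSeries ℂ) ≠ 0 := by
  intro h
  have := congrArg (PowerSeries.coeff (R := ℂ) 1) h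
  rw [exp_pow_eq_rescale_exp, map_sub] at this
  simp [PowerSeries.coeff_rescale, PowerSeries.coeff_exp] at this

lemma IdA : X * (g1⁻¹ + g2⁻¹) = B3 - B := by
  apply mul_right_cancel₀ hE3ne
  have e3 : E^3 - 1 = g1*g2*(E - 1) := by rw [hg12]; ring
  have lhs : X * (g1⁻¹ + g2⁻¹) * (E^3 - 1)
      = X * ((g1*g1⁻¹)*(g2*(E-1)) + (g2*g2⁻¹)*(g1*(E-1))) := by rw [e3]; ring
  have factor : (E:PowerSeries ℂ)^3 - 1 = (E - 1)*(E^2+E+1) := by ring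
  have rhs : (B3 - B) * (E^3 - 1) = B3*(E^3-1) - (B*(E-1))*(E^2+E+1) := by
    rw [factor]; ring
  have h3 : (PowerSeries.C (R := ℂ)) 3 = (3 : PowerSeries ℂ) := map_ofNat _ 3
  have hkey : (1:PowerSeries ℂ)*(g2*(E-1)) + 1*(g1*(E-1)) = (E-1)*(-E-2) := by
    rw [show (1:PowerSeries ℂ)*(g2*(E-1)) + 1*(g1*(E-1)) = (E-1)*(g1+g2) from by ring, hgsum]
  rw [lhs, hinv1, hinv2, hkey, rhs, hB3, bernoulliPowerSeries_mul_exp_sub_one, h3]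
  ring

lemma IdB : X * PowerSeries.C (R := ℂ) 3 * (g1⁻¹ - g2⁻¹)
    = PowerSeries.C (R := ℂ) ((rootN 3)^2 - (rootN 3)) * (B3 * (E^2 - E)) := by
  apply mul_right_cancel₀ hE3ne
  have e3 : E^3 - 1 = g1*g2*(E - 1) := by rw [hg12]; ring
  have hdiffg : g2 - g1 = PowerSeries.C (R := ℂ) ((rootN 3)^2 - (rootN 3)) * E := by
    simp only [g1, g2, map_sub]; ring
  calc X * PowerSeries.C (R := ℂ) 3 * (g1⁻¹ - g2⁻¹) * (E^3-1)
      = X * PowerSeries.C (R := ℂ) 3 * ((g1*g1⁻¹)*(g2*(E-1)) - (g2*g2⁻¹)*(g1*(E-1))) := by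
        rw [e3]; ring
    _ = X * PowerSeries.C (R := ℂ) 3 * ((g2-g1)*(E-1)) := by rw [hinv1, hinv2]; ring
    _ = PowerSeries.C (R := ℂ) ((rootN 3)^2-(rootN 3)) * ((PowerSeries.C (R := ℂ) 3 * X)*(E^2-E)) := by
        rw [hdiffg]; ring
    _ = PowerSeries.C (R := ℂ) ((rootN 3)^2 - (rootN 3)) * (B3 * (E^2 - E)) * (E^3-1) := by
        rw [← hB3]; ring

lemma hEne : (E : PowerSeries ℂ) ≠ 0 := by
  intro h
  have := congrArg (PowerSeries.constantCoeff (R := ℂ)) h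
  simp [PowerSeries.constantCoeff_exp] at this

lemma rescale_C' (a b : ℂ) : PowerSeries.rescale a (PowerSeries.C (R := ℂ) b) = PowerSeries.C (R := ℂ) b := by
  ext n
  simp only [PowerSeries.coeff_rescale, PowerSeries.coeff_C]
  by_cases h : n = 0 <;> simp [h]

lemma IdC : PowerSeries.rescale (-1:ℂ) g1⁻¹ = -(1 + g2⁻¹) := by
  have hEneg : E * PowerSeries.rescale (-1:ℂ) E = 1 := PowerSeries.exp_mul_exp_neg_eq_one
  have hg : PowerSeries.rescale (-1:ℂ) g1
      = PowerSeries.C (R := ℂ) (rootN 3) * PowerSeries.rescale (-1:ℂ) E - 1 := by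
    simp only [g1, map_sub, map_mul, map_one, rescale_C']
  have hC : PowerSeries.C (R := ℂ) (rootN 3) * g2 = E - PowerSeries.C (R := ℂ) (rootN 3) := by
    have h13 : (rootN 3) * (rootN 3)^2 = 1 := by linear_combination eta_cube
    simp only [g2, mul_sub, ← mul_assoc, ← map_mul, h13, map_one, one_mul, mul_one]
  have h1 : PowerSeries.rescale (-1:ℂ) g1 * PowerSeries.rescale (-1:ℂ) g1⁻¹ = 1 := by
    rw [← map_mul, hinv1, map_one]
  have h2 : PowerSeries.rescale (-1:ℂ) g1 * (-(1 + g2⁻¹)) = 1 := by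
    apply mul_left_cancel₀ hEne
    rw [hg, mul_one]
    calc E * ((PowerSeries.C (R := ℂ) (rootN 3) * PowerSeries.rescale (-1:ℂ) E - 1) * (-(1+g2⁻¹)))
        = (PowerSeries.C (R := ℂ) (rootN 3) * (E * PowerSeries.rescale (-1:ℂ) E) - E) * (-(1+g2⁻¹)) := by
          ring
      _ = (E - PowerSeries.C (R := ℂ) (rootN 3)) * (1+g2⁻¹) := by rw [hEneg]; ring
      _ = PowerSeries.C (R := ℂ) (rootN 3) * g2 + PowerSeries.C (R := ℂ) (rootN 3) * (g2 * g2⁻¹) := by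
          rw [← hC]; ring
      _ = E := by rw [hinv2, hC]; ring
  calc PowerSeries.rescale (-1:ℂ) g1⁻¹
      = PowerSeries.rescale (-1:ℂ) g1⁻¹ * (PowerSeries.rescale (-1:ℂ) g1 * (-(1+g2⁻¹))) := by
        rw [h2, mul_one]
    _ = (PowerSeries.rescale (-1:ℂ) g1 * PowerSeries.rescale (-1:ℂ) g1⁻¹) * (-(1+g2⁻¹)) := by
        ring
    _ = -(1+g2⁻¹) := by rw [h1, one_mul]

lemma coeff_B3 (a : ℕ) : PowerSeries.coeff (R := ℂ) a B3 = 3^a * (bernoulli a : ℂ) / a.factorial := by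
  rw [B3, PowerSeries.coeff_rescale, bernoulliPowerSeries, PowerSeries.coeff_mk, eq_ratCast]
  push_cast; ring

lemma coeff_E2E (b : ℕ) : PowerSeries.coeff (R := ℂ) b (E^2 - E) = ((2:ℂ)^b - 1) / b.factorial := by
  rw [map_sub, PowerSeries.exp_pow_eq_rescale_exp, PowerSeries.coeff_rescale,
    PowerSeries.coeff_exp]
  simp only [eq_ratCast]
  push_cast; ring

lemma coeffA (m : ℕ) : PowerSeries.coeff (R := ℂ) m (g1⁻¹ + g2⁻¹)
    = ((3:ℂ)^(m+1) - 1) * (bernoulli (m+1) : ℂ) / (m+1).factorial := by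
  have h := congrArg (PowerSeries.coeff (R := ℂ) (m+1)) IdA
  rw [PowerSeries.coeff_succ_X_mul, map_sub, coeff_B3, bernoulliPowerSeries,
    PowerSeries.coeff_mk, eq_ratCast] at h
  rw [h]
  push_cast
  ring

lemma coeffC (m : ℕ) (hm : m ≠ 0) :
    PowerSeries.coeff (R := ℂ) m g2⁻¹ = (-1)^(m+1) * PowerSeries.coeff (R := ℂ) m g1⁻¹ := by
  have h := congrArg (PowerSeries.coeff (R := ℂ) m) IdC
  rw [PowerSeries.coeff_rescale] at h
  have h1 : PowerSeries.coeff (R := ℂ) m (-(1 + g2⁻¹) : PowerSeries ℂ)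
      = -(PowerSeries.coeff (R := ℂ) m g2⁻¹) := by
    rw [map_neg, map_add, PowerSeries.coeff_one, if_neg hm]; ring
  rw [h1] at h
  linear_combination h

lemma coeffDiff (m : ℕ) : (3:ℂ) * PowerSeries.coeff (R := ℂ) m (g1⁻¹ - g2⁻¹)
    = ((rootN 3)^2 - (rootN 3)) * ∑ p ∈ Finset.HasAntidiagonal.antidiagonal (m+1),
        (3^p.1 * (bernoulli p.1 : ℂ) / p.1.factorial) * (((2:ℂ)^p.2 - 1) / p.2.factorial) := by
  have h := congrArg (PowerSeries.coeff (R := ℂ) (m+1)) IdB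
  rw [mul_assoc, PowerSeries.coeff_succ_X_mul, PowerSeries.coeff_C_mul,
    PowerSeries.coeff_C_mul, PowerSeries.coeff_mul] at h
  rw [h]
  congr 1
  apply Finset.sum_congr rfl
  intro p _
  rw [coeff_B3, coeff_E2E]



lemma odd_flip (n : ℕ) (hn : 1 ≤ n) :
    PowerSeries.coeff (R := ℂ) (2*n-1) g2⁻¹ = PowerSeries.coeff (R := ℂ) (2*n-1) g1⁻¹ := by
  rw [coeffC (2*n-1) (by omega), show 2*n-1+1 = 2*n from by omega, pow_mul]
  norm_num

lemma even_flip (n : ℕ) (hn : 1 ≤ n) :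
    PowerSeries.coeff (R := ℂ) (2*n) g2⁻¹ = - PowerSeries.coeff (R := ℂ) (2*n) g1⁻¹ := by
  rw [coeffC (2*n) (by omega), pow_succ, pow_mul]
  norm_num

lemma odd_val (n : ℕ) (hn : 1 ≤ n) :
    ((2*n-1).factorial : ℂ) * PowerSeries.coeff (R := ℂ) (2*n-1) g1⁻¹
      = ((3:ℂ)^(2*n) - 1) * (bernoulli (2*n) : ℂ) / (4 * (n:ℂ)) := by
  have hA := coeffA (2*n-1)
  rw [map_add, show 2*n-1+1 = 2*n from by omega, odd_flip n hn] at hA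
  have hfac : ((2*n).factorial : ℂ) = (2*(n:ℂ)) * ((2*n-1).factorial : ℂ) := by
    have h := Nat.mul_factorial_pred (show 2*n ≠ 0 by omega)
    push_cast [← h]; ring
  have hfne : ((2*n).factorial : ℂ) ≠ 0 := Nat.cast_ne_zero.mpr (Nat.factorial_ne_zero _)
  have hnne : (4*(n:ℂ)) ≠ 0 := by
    have : ((n:ℕ):ℂ) ≠ 0 := Nat.cast_ne_zero.mpr (by omega)
    intro h; apply this; linear_combination h/4
  have hs2 : (PowerSeries.coeff (R := ℂ) (2*n-1) g1⁻¹ + PowerSeries.coeff (R := ℂ) (2*n-1) g1⁻¹)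
      * ((2*n).factorial:ℂ) = ((3:ℂ)^(2*n) - 1) * (bernoulli (2*n) : ℂ) := by
    rw [hA]; field_simp
  rw [eq_div_iff hnne]
  linear_combination hs2 - 2*(PowerSeries.coeff (R := ℂ) (2*n-1) g1⁻¹)*hfac

lemma even_val (n : ℕ) (hn : 1 ≤ n) :
    ((2*n).factorial : ℂ) * PowerSeries.coeff (R := ℂ) (2*n) g1⁻¹
      = -(Complex.I * (Real.sqrt 3 : ℂ) / (6 * (2 * (n:ℂ) + 1))) *
          ∑ j ∈ Finset.range (2 * n + 1),
            (3 : ℂ) ^ (2 * n - j) * ((2 : ℂ) ^ (j + 1) - 1) *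
              (Nat.choose (2 * n + 1) (2 * n - j) : ℂ) * (bernoulli (2 * n - j) : ℂ) := by
  set f : ℕ → ℂ := fun k => 3^k * ((2:ℂ)^(2*n+1-k) - 1) * ((2*n+1).choose k : ℂ)
      * (bernoulli k : ℂ) with hf
  have hG : (∑ j ∈ Finset.range (2 * n + 1),
      (3 : ℂ) ^ (2 * n - j) * ((2 : ℂ) ^ (j + 1) - 1) *
        (Nat.choose (2 * n + 1) (2 * n - j) : ℂ) * (bernoulli (2 * n - j) : ℂ))
      = ∑ k ∈ Finset.range (2*n+1), f k := by
    calc (∑ j ∈ Finset.range (2 * n + 1),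
        (3 : ℂ) ^ (2 * n - j) * ((2 : ℂ) ^ (j + 1) - 1) *
          (Nat.choose (2 * n + 1) (2 * n - j) : ℂ) * (bernoulli (2 * n - j) : ℂ))
        = ∑ j ∈ Finset.range (2*n+1), f (2*n+1-1-j) := by
          apply Finset.sum_congr rfl
          intro j hj
          have hj' : j ≤ 2*n := by simp only [Finset.mem_range] at hj; omega
          simp only [hf]
          rw [show 2*n+1-1-j = 2*n-j from by omega,
            show 2*n+1-(2*n-j) = j+1 from by omega]
      _ = ∑ k ∈ Finset.range (2*n+1), f k := Finset.sum_range_reflect f (2*n+1)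
  have hfext : ∑ k ∈ Finset.range (2*n+2), f k = ∑ k ∈ Finset.range (2*n+1), f k := by
    rw [Finset.sum_range_succ]
    have hz : f (2*n+1) = 0 := by
      simp only [hf]
      rw [show 2*n+1-(2*n+1) = 0 from by omega]
      norm_num
    rw [hz, add_zero]
  have hT : ((2*n+1).factorial : ℂ) * (∑ p ∈ Finset.HasAntidiagonal.antidiagonal (2*n+1),
        (3^p.1 * (bernoulli p.1 : ℂ)/p.1.factorial) * (((2:ℂ)^p.2 - 1)/p.2.factorial))
      = ∑ k ∈ Finset.range (2*n+1), f k := by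
    rw [Finset.Nat.sum_antidiagonal_eq_sum_range_succ_mk, ← hfext, Finset.mul_sum]
    apply Finset.sum_congr rfl
    intro k hk
    have hk' : k ≤ 2*n+1 := by simp only [Finset.mem_range] at hk; omega
    have hcf : ((2*n+1).choose k : ℂ) * (k.factorial:ℂ) * ((2*n+1-k).factorial:ℂ)
        = ((2*n+1).factorial:ℂ) := by
      exact_mod_cast congrArg (Nat.cast : ℕ → ℂ)
        (Nat.choose_mul_factorial_mul_factorial hk')
    have h1 : (k.factorial:ℂ) ≠ 0 := Nat.cast_ne_zero.mpr (Nat.factorial_ne_zero _)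
    have h2 : ((2*n+1-k).factorial:ℂ) ≠ 0 := Nat.cast_ne_zero.mpr (Nat.factorial_ne_zero _)
    simp only [hf]
    field_simp
    linear_combination ((bernoulli k : ℂ) * (1 - (2:ℂ)^(2*n+1-k))) * hcf
  have hD := coeffDiff (2*n)
  rw [map_sub, even_flip n hn, eta_diff] at hD
  have h6 : 6 * PowerSeries.coeff (R := ℂ) (2*n) g1⁻¹
      = -(Complex.I * ((Real.sqrt 3 : ℝ):ℂ)) * (∑ p ∈ Finset.HasAntidiagonal.antidiagonal (2*n+1),
        (3^p.1 * (bernoulli p.1 : ℂ)/p.1.factorial) * (((2:ℂ)^p.2 - 1)/p.2.factorial)) := by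
    linear_combination hD
  have hfs : ((2*n+1).factorial : ℂ) = (2*(n:ℂ)+1) * ((2*n).factorial:ℂ) := by
    have h := Nat.factorial_succ (2*n)
    push_cast [h]; ring
  have hne : (2*(n:ℂ)+1) ≠ 0 := by
    have h : ((2*n+1:ℕ):ℂ) ≠ 0 := Nat.cast_ne_zero.mpr (by omega)
    push_cast at h; exact h
  rw [hG, ← hT, hfs]
  generalize hTg : (∑ p ∈ Finset.HasAntidiagonal.antidiagonal (2*n+1),
        (3^p.1 * (bernoulli p.1 : ℂ)/p.1.factorial) * (((2:ℂ)^p.2 - 1)/p.2.factorial)) = T at h6 ⊢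
  field_simp
  linear_combination (((2*n).factorial:ℂ)) * h6

lemma omega1 (n : ℕ) : omegaN 3 1 n = (n.factorial : ℂ) * PowerSeries.coeff (R := ℂ) n g1⁻¹ := by
  rw [omegaN, if_neg (by decide)]
  norm_num [g1]

lemma omega2 (n : ℕ) : omegaN 3 2 n = (n.factorial : ℂ) * PowerSeries.coeff (R := ℂ) n g2⁻¹ := by
  rw [omegaN, if_neg (by decide)]
  norm_num [g2, zpow_two, sq]

lemma cg1inv0 : PowerSeries.coeff (R := ℂ) 0 g1⁻¹ = (rootN 3 ^ 2 - 1) / 3 := by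
  rw [PowerSeries.coeff_zero_eq_constantCoeff, PowerSeries.constantCoeff_inv]
  have h : PowerSeries.constantCoeff (R := ℂ) g1 = rootN 3 - 1 := by
    simp [g1, PowerSeries.constantCoeff_exp]
  rw [h]
  have hne : rootN 3 - 1 ≠ 0 := sub_ne_zero_of_ne eta_ne_one
  field_simp
  linear_combination -eta_prod

end Aux4

theorem stmt_4 :
    omegaN 3 1 0 = (rootN 3 ^ 2 - 1) / 3 ∧
    ∀ n : ℕ, 1 ≤ n →
      omegaN 3 1 (2 * n - 1) = ((3 : ℂ) ^ (2 * n) - 1) * (bernoulli (2 * n) : ℂ) / (4 * n) ∧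
      omegaN 3 2 (2 * n - 1) = ((3 : ℂ) ^ (2 * n) - 1) * (bernoulli (2 * n) : ℂ) / (4 * n) ∧
      omegaN 3 1 (2 * n) = -(Complex.I * (Real.sqrt 3 : ℂ) / (6 * (2 * n + 1))) *
          ∑ j ∈ Finset.range (2 * n + 1),
            (3 : ℂ) ^ (2 * n - j) * ((2 : ℂ) ^ (j + 1) - 1) *
              (Nat.choose (2 * n + 1) (2 * n - j) : ℂ) * (bernoulli (2 * n - j) : ℂ) ∧
      omegaN 3 2 (2 * n) = -omegaN 3 1 (2 * n) := by
  constructor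
  · rw [Aux4.omega1, Aux4.cg1inv0]; simp
  intro n hn
  refine ⟨?_, ?_, ?_, ?_⟩
  · rw [Aux4.omega1]; exact Aux4.odd_val n hn
  · rw [Aux4.omega2, Aux4.odd_flip n hn]; exact Aux4.odd_val n hn
  · rw [Aux4.omega1]; exact Aux4.even_val n hn
  · rw [Aux4.omega1, Aux4.omega2, Aux4.even_flip n hn]; ring

end
end

section
/- Let N = 4 and η = i. Then for all n ≥ 0: ω⁴_{n;2} = ω²_{n;1} = (2^{n+1} − 1)·B_{n+1}/(n+1) and ω⁴_{n;3} is the complex conjugate of ω⁴_{n;1}; moreover ω⁴_{0;1} = (−1 − i)/2, ω⁴_{n;1} = 2^n·(2^{n+1} − 1)·B_{n+1}/(n+1) for every odd n ≥ 1, and ω⁴_{n;1} = −(i/2)·E_n for every even n ≥ 2, where E_n := n! times the coefficient of X^n in the multiplicative inverse of the power series (exp(X) + exp(−X))/2 ∈ ℂ[[X]] (the Euler numbers, generating function sech). -/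
open scoped BigOperators

noncomputable section

/-- The Euler numbers `E_n`: `n!` times the coefficient of `X^n` in the multiplicative
inverse of `(exp(X) + exp(-X))/2` (the generating function of `sech`). -/
def eulerE (n : ℕ) : ℂ :=
  (n.factorial : ℂ) * (PowerSeries.coeff (R := ℂ) n)
    (PowerSeries.C (R := ℂ) (1 / 2) *
      (PowerSeries.exp ℂ + PowerSeries.rescale (-1 : ℂ) (PowerSeries.exp ℂ)))⁻¹

open PowerSeries

lemma rootN_four : rootN 4 = Complex.I := by
  have h : (2 * (Real.pi : ℂ) * Complex.I / ((4:ℕ) : ℂ)) = ((Real.pi / 2 : ℝ) : ℂ) * Complex.I := by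
    push_cast; ring
  rw [rootN, h, Complex.exp_mul_I, ← Complex.ofReal_cos, ← Complex.ofReal_sin,
    Real.cos_pi_div_two, Real.sin_pi_div_two]
  simp

lemma rootN_two : rootN 2 = -1 := by
  have h : (2 * (Real.pi : ℂ) * Complex.I / (2 : ℕ)) = (Real.pi : ℂ) * Complex.I := by
    push_cast; ring
  rw [rootN, h, Complex.exp_pi_mul_I]

/-- The series with coefficients `(2^(n+1)-1) B_{n+1} / (n+1)!`, i.e. `-1/(e^X+1)`. -/
def Gser : PowerSeries ℂ :=
  PowerSeries.mk fun n => ((2:ℂ)^(n+1) - 1) * (bernoulli (n+1) : ℂ) / (n+1).factorial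

lemma X_mul_Gser :
    (X : PowerSeries ℂ) * Gser =
      rescale (2:ℂ) (bernoulliPowerSeries ℂ) - bernoulliPowerSeries ℂ := by
  ext n
  cases n with
  | zero =>
    have h0 : (constantCoeff (R := ℂ)) (rescale (2:ℂ) (bernoulliPowerSeries ℂ)) = 1 := by
      rw [← coeff_zero_eq_constantCoeff_apply, coeff_rescale]; simp [bernoulliPowerSeries]
    have h1 : (constantCoeff (R := ℂ)) (bernoulliPowerSeries ℂ) = 1 := by
      rw [← coeff_zero_eq_constantCoeff_apply]; simp [bernoulliPowerSeries]
    simp [h0, h1]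
  | succ n =>
    rw [coeff_succ_X_mul]
    simp only [Gser, bernoulliPowerSeries, coeff_mk, map_sub, coeff_rescale, eq_ratCast]
    push_cast
    ring

lemma exp_sub_one_ne_zero : (exp ℂ - 1) ≠ 0 := by
  intro h
  have := congrArg (coeff (R := ℂ) 1) h
  simp [coeff_exp] at this

lemma Gser_spec : (PowerSeries.C (R := ℂ) (-1) * exp ℂ - 1)⁻¹ = Gser := by
  rw [PowerSeries.inv_eq_iff_mul_eq_one (by simp; norm_num)]
  have hX : (X : PowerSeries ℂ) ≠ 0 := X_ne_zero
  have hc : (X : PowerSeries ℂ) * (exp ℂ - 1) ≠ 0 := mul_ne_zero hX exp_sub_one_ne_zero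
  apply mul_left_cancel₀ hc
  have hB := bernoulliPowerSeries_mul_exp_sub_one ℂ
  have hB2 := congrArg (rescale (2:ℂ)) hB
  rw [map_mul, map_sub, map_one, rescale_X,
    show (2:ℂ) = ((2:ℕ):ℂ) by norm_num, ← exp_pow_eq_rescale_exp] at hB2
  have hXG := X_mul_Gser
  push_cast at hB2 ⊢
  simp only [map_neg, map_one, map_ofNat] at hB2 ⊢
  linear_combination (((-1)*exp ℂ - 1) * (exp ℂ - 1)) * hXG - hB2 + (exp ℂ + 1) * hB

lemma map_conj_exp : PowerSeries.map (starRingEnd ℂ) (exp ℂ) = exp ℂ := by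
  ext n
  simp only [PowerSeries.coeff_map, coeff_exp, eq_ratCast, map_ratCast]

lemma conj_inv_eq (c : ℂ) (hc : c ≠ 1) :
    (PowerSeries.C (R := ℂ) (starRingEnd ℂ c) * exp ℂ - 1)⁻¹ =
      PowerSeries.map (starRingEnd ℂ) ((PowerSeries.C (R := ℂ) c * exp ℂ - 1)⁻¹) := by
  have hcc : (constantCoeff (R := ℂ)) (PowerSeries.C (R := ℂ) c * exp ℂ - 1) ≠ 0 := by
    simp [sub_ne_zero, hc]
  rw [PowerSeries.inv_eq_iff_mul_eq_one (by simp [sub_ne_zero]; exact fun h => hc (by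
    have := congrArg (starRingEnd ℂ) h; simpa using this))]
  have : PowerSeries.C (R := ℂ) (starRingEnd ℂ c) * exp ℂ - 1
      = PowerSeries.map (starRingEnd ℂ) (PowerSeries.C (R := ℂ) c * exp ℂ - 1) := by
    rw [map_sub, map_mul, PowerSeries.map_C, map_conj_exp, map_one]
  rw [this, ← map_mul, PowerSeries.inv_mul_cancel _ hcc, map_one]

/-- `W = (e^X + e^{-X})/2`. -/
def Wser : PowerSeries ℂ :=
  PowerSeries.C (R := ℂ) (1 / 2) * (exp ℂ + rescale (-1 : ℂ) (exp ℂ))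

lemma constantCoeff_Wser : (constantCoeff (R := ℂ)) Wser = 1 := by
  have : (constantCoeff (R := ℂ)) (rescale (-1:ℂ) (exp ℂ)) = 1 := by
    rw [← coeff_zero_eq_constantCoeff_apply, coeff_rescale]; simp [coeff_exp]
  simp [Wser, this, constantCoeff_exp]
  norm_num

lemma Wser_ne : (constantCoeff (R := ℂ)) Wser ≠ 0 := by rw [constantCoeff_Wser]; exact one_ne_zero

lemma exp_mul_rescale_neg : exp ℂ * rescale (-1:ℂ) (exp ℂ) = 1 := by
  have := exp_mul_exp_neg_eq_one (A := ℂ)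
  simpa [PowerSeries.evalNegHom] using this

lemma rescale_neg_Wser : rescale (-1:ℂ) Wser = Wser := by
  have hC : rescale (-1:ℂ) (PowerSeries.C (R := ℂ) (1/2 : ℂ)) = PowerSeries.C (R := ℂ) (1/2 : ℂ) := by
    ext n; cases n <;> simp [coeff_rescale]
  rw [Wser, map_mul, hC, map_add, rescale_rescale]
  norm_num [add_comm]

lemma rescale_neg_Wser_inv : rescale (-1:ℂ) Wser⁻¹ = Wser⁻¹ := by
  rw [PowerSeries.eq_inv_iff_mul_eq_one Wser_ne]
  have h := congrArg (rescale (-1:ℂ)) (PowerSeries.inv_mul_cancel Wser Wser_ne)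
  rw [map_mul, map_one, rescale_neg_Wser] at h
  exact h

lemma coeff_Wser_inv_odd {n : ℕ} (hn : Odd n) : (coeff (R := ℂ) n) Wser⁻¹ = 0 := by
  have h := congrArg (coeff (R := ℂ) n) rescale_neg_Wser_inv
  rw [coeff_rescale, hn.neg_one_pow] at h
  have h3 : (2:ℂ) * (coeff (R := ℂ) n) Wser⁻¹ = 0 := by linear_combination -h
  exact (mul_eq_zero.mp h3).resolve_left two_ne_zero

lemma hR_spec : (exp ℂ ^ 2 + 1) * rescale (2:ℂ) Gser = -1 := by
  have hG : Gser * (PowerSeries.C (R := ℂ) (-1) * exp ℂ - 1) = 1 := by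
    rw [← Gser_spec]
    exact PowerSeries.inv_mul_cancel _ (by simp; norm_num)
  have h2 := congrArg (rescale (2:ℂ)) hG
  rw [map_mul, map_sub, map_mul, map_one] at h2
  have hCr : rescale (2:ℂ) (PowerSeries.C (R := ℂ) (-1:ℂ)) = PowerSeries.C (R := ℂ) (-1:ℂ) := by
    ext n; cases n <;> simp [coeff_rescale]
  rw [hCr, show (2:ℂ) = ((2:ℕ):ℂ) by norm_num, ← exp_pow_eq_rescale_exp] at h2
  push_cast at h2
  simp only [map_neg, map_one] at h2 ⊢
  linear_combination -h2

lemma hWE : Wser * exp ℂ = PowerSeries.C (R := ℂ) (1/2) * (exp ℂ ^ 2 + 1) := by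
  rw [Wser]
  linear_combination PowerSeries.C (R := ℂ) (1/2:ℂ) * exp_mul_rescale_neg

lemma h4_spec : (exp ℂ ^ 2 + 1) * (PowerSeries.C (R := ℂ) (1/2) * Wser⁻¹) = exp ℂ := by
  have hWinv : Wser * Wser⁻¹ = 1 := PowerSeries.mul_inv_cancel _ Wser_ne
  linear_combination exp ℂ * hWinv - Wser⁻¹ * hWE

lemma exp_sq_add_one_ne : (exp ℂ ^ 2 + 1 : PowerSeries ℂ) ≠ 0 := by
  intro h
  have := congrArg (constantCoeff (R := ℂ)) h
  simp [constantCoeff_exp] at this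

lemma hF_spec : (PowerSeries.C (R := ℂ) Complex.I * exp ℂ - 1)⁻¹ =
    rescale (2:ℂ) Gser - PowerSeries.C (R := ℂ) Complex.I * (PowerSeries.C (R := ℂ) (1/2) * Wser⁻¹) := by
  have hI : PowerSeries.C (R := ℂ) Complex.I * PowerSeries.C (R := ℂ) Complex.I = -1 := by
    rw [← map_mul, Complex.I_mul_I, map_neg, map_one]
  have hIne : Complex.I - 1 ≠ 0 := by
    rw [sub_ne_zero]
    intro h
    have := congrArg Complex.im h
    simp at this
  rw [PowerSeries.inv_eq_iff_mul_eq_one (by simp [constantCoeff_exp, hIne])]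
  apply mul_left_cancel₀ exp_sq_add_one_ne
  linear_combination (PowerSeries.C (R := ℂ) Complex.I * exp ℂ - 1) * hR_spec -
    PowerSeries.C (R := ℂ) Complex.I * (PowerSeries.C (R := ℂ) Complex.I * exp ℂ - 1) * h4_spec -
    exp ℂ ^ 2 * hI

lemma fact_div (n : ℕ) (z : ℂ) :
    (n.factorial : ℂ) * (z / (n+1).factorial) = z / (n+1) := by
  rw [Nat.factorial_succ]
  have h1 : ((n.factorial : ℂ)) ≠ 0 := Nat.cast_ne_zero.mpr n.factorial_ne_zero
  have h2 : ((n:ℂ)+1) ≠ 0 := by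
    have : (((n+1 : ℕ)):ℂ) ≠ 0 := Nat.cast_ne_zero.mpr (Nat.succ_ne_zero n)
    push_cast at this; exact this
  push_cast
  field_simp

lemma omega42_eq (n : ℕ) :
    omegaN 4 2 n = ((2:ℂ)^(n+1) - 1) * (bernoulli (n+1) : ℂ) / (n+1) := by
  rw [omegaN, if_neg (by decide)]
  have hr : rootN 4 ^ (2:ℤ) = -1 := by
    rw [rootN_four, show (2:ℤ) = ((2:ℕ):ℤ) from rfl, zpow_natCast, sq, Complex.I_mul_I]
  rw [hr, Gser_spec, Gser, coeff_mk, fact_div]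

lemma omega21_eq (n : ℕ) :
    omegaN 2 1 n = ((2:ℂ)^(n+1) - 1) * (bernoulli (n+1) : ℂ) / (n+1) := by
  rw [omegaN, if_neg (by decide)]
  have hr : rootN 2 ^ (1:ℤ) = -1 := by rw [rootN_two, zpow_one]
  rw [hr, Gser_spec, Gser, coeff_mk, fact_div]

lemma I_ne_one : Complex.I ≠ 1 := by
  intro h
  have := congrArg Complex.im h
  simp at this

lemma omega43_eq (n : ℕ) : omegaN 4 3 n = (starRingEnd ℂ) (omegaN 4 1 n) := by
  rw [omegaN, omegaN, if_neg (by decide), if_neg (by decide)]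
  have h3 : rootN 4 ^ (3:ℤ) = (starRingEnd ℂ) Complex.I := by
    rw [rootN_four, show (3:ℤ) = ((3:ℕ):ℤ) from rfl, zpow_natCast, Complex.conj_I]
    simp [pow_succ, Complex.I_mul_I]
  have h1 : rootN 4 ^ (1:ℤ) = Complex.I := by rw [rootN_four, zpow_one]
  rw [h3, h1, conj_inv_eq Complex.I I_ne_one, PowerSeries.coeff_map, map_mul, map_natCast]

lemma omega41_eq (n : ℕ) :
    omegaN 4 1 n = (n.factorial : ℂ) *
      ((coeff (R := ℂ) n) (rescale (2:ℂ) Gser) - Complex.I * ((1/2) * (coeff (R := ℂ) n) Wser⁻¹)) := by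
  rw [omegaN, if_neg (by decide), show rootN 4 ^ (1:ℤ) = Complex.I from by
    rw [rootN_four, zpow_one]]
  rw [hF_spec, map_sub]
  simp [PowerSeries.coeff_C_mul]

theorem stmt_5 :
    (∀ n : ℕ, omegaN 4 2 n = omegaN 2 1 n ∧
        omegaN 4 2 n = ((2 : ℂ) ^ (n + 1) - 1) * (bernoulli (n + 1) : ℂ) / (n + 1) ∧
        omegaN 4 3 n = (starRingEnd ℂ) (omegaN 4 1 n)) ∧
    omegaN 4 1 0 = (-1 - Complex.I) / 2 ∧
    (∀ n : ℕ, 1 ≤ n → Odd n →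
        omegaN 4 1 n = (2 : ℂ) ^ n * ((2 : ℂ) ^ (n + 1) - 1) * (bernoulli (n + 1) : ℂ) / (n + 1)) ∧
    (∀ n : ℕ, 2 ≤ n → Even n → omegaN 4 1 n = -(Complex.I / 2) * eulerE n) := by
  refine ⟨fun n => ⟨?_, ?_, omega43_eq n⟩, ?_, fun n hn hodd => ?_, fun n hn heven => ?_⟩
  · rw [omega42_eq, omega21_eq]
  · rw [omega42_eq]
  · -- n = 0
    rw [omega41_eq]
    have hc1 : (coeff (R := ℂ) 0) (rescale (2:ℂ) Gser) = -(1/2 : ℂ) := by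
      rw [coeff_rescale, Gser, coeff_mk]
      norm_num [bernoulli_one]
    have hc2 : (coeff (R := ℂ) 0) Wser⁻¹ = 1 := by
      rw [coeff_zero_eq_constantCoeff_apply, PowerSeries.constantCoeff_inv, constantCoeff_Wser,
        inv_one]
    rw [hc1, hc2]
    simp
    ring_nf
  · -- odd n
    rw [omega41_eq, coeff_Wser_inv_odd hodd, coeff_rescale, Gser, coeff_mk]
    rw [mul_zero, mul_zero, sub_zero,
      show (2:ℂ)^n * (((2:ℂ)^(n+1)-1) * (bernoulli (n+1) : ℂ) / ((n+1).factorial : ℂ))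
        = ((2:ℂ)^n * (((2:ℂ)^(n+1)-1) * (bernoulli (n+1) : ℂ))) / ((n+1).factorial : ℂ) from by
          ring]
    rw [fact_div]
    ring
  · -- even n
    rw [omega41_eq, coeff_rescale, Gser, coeff_mk]
    have hb : bernoulli (n+1) = 0 := by
      rw [bernoulli_eq_bernoulli'_of_ne_one (by omega)]
      exact bernoulli'_eq_zero_of_odd (heven.add_one) (by omega)
    rw [hb, eulerE,
      show (PowerSeries.C (R := ℂ) (1/2 : ℂ) * (PowerSeries.exp ℂ +
        PowerSeries.rescale (-1:ℂ) (PowerSeries.exp ℂ))) = Wser from rfl]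
    push_cast
    ring

end
end
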